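/- Let L ∈ ℕ, let ℒ be the (finite) set of multi-indices (l,m,n) ∈ ℕ³ with l+m+n ≤ L, let x₁,…,x_N ∈ ℝ³ be grid points, and let Λ be the N × |ℒ| matrix with entries Λ_{i,(lmn)} = Λ_{lmn}(x_i). Suppose Λ = Q·R where Q is N × |ℒ| with QᵀQ = I and R is an invertible |ℒ| × |ℒ| matrix. Then for every polynomial f in three variables of total degree at most L, setting f_p = (f(x₁),…,f(x_N)) ∈ ℝ^N and F = R⁻¹·Qᵀ·f_p ∈ ℝ^{|ℒ|}, one has f(r) = Σ_{(l,m,n)∈ℒ} Λ_{lmn}(r)·F_{lmn} for every r ∈ ℝ³. (The free mesh transform reproduces polynomials of degree ≤ L exactly at every point.) -/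

import Mathlib

open Matrix

/-- Geometric moments `Λ_{lmn}(x) = x₁^l x₂^m x₃^n / (l! m! n!)` for
`x : Fin 3 → ℝ`. -/
noncomputable def geomMoment (p : ℕ × ℕ × ℕ) (x : Fin 3 → ℝ) : ℝ :=
  x 0 ^ p.1 * x 1 ^ p.2.1 * x 2 ^ p.2.2 /
    ((p.1.factorial : ℝ) * (p.2.1.factorial : ℝ) * (p.2.2.factorial : ℝ))

noncomputable def toFinsupp3 (p : ℕ × ℕ × ℕ) : Fin 3 →₀ ℕ :=
  Finsupp.equivFunOnFinite.symm ![p.1, p.2.1, p.2.2]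

lemma toFinsupp3_apply (p : ℕ × ℕ × ℕ) (i : Fin 3) :
    toFinsupp3 p i = ![p.1, p.2.1, p.2.2] i := rfl

noncomputable def geomCoeff (f : MvPolynomial (Fin 3) ℝ) (p : ℕ × ℕ × ℕ) : ℝ :=
  MvPolynomial.coeff (toFinsupp3 p) f *
    ((p.1.factorial : ℝ) * (p.2.1.factorial : ℝ) * (p.2.2.factorial : ℝ))

lemma eval_eq_sum_geom (L : ℕ) (S : Finset (ℕ × ℕ × ℕ))
    (hS : ∀ p : ℕ × ℕ × ℕ, p ∈ S ↔ p.1 + p.2.1 + p.2.2 ≤ L)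
    (f : MvPolynomial (Fin 3) ℝ) (hf : f.totalDegree ≤ L) (r : Fin 3 → ℝ) :
    MvPolynomial.eval r f = ∑ p ∈ S, geomMoment p r * geomCoeff f p := by
  have hfact : ∀ p : ℕ × ℕ × ℕ,
      ((p.1.factorial : ℝ) * (p.2.1.factorial : ℝ) * (p.2.2.factorial : ℝ)) ≠ 0 := by
    intro p
    positivity
  have hterm : ∀ p : ℕ × ℕ × ℕ, geomMoment p r * geomCoeff f p =
      MvPolynomial.coeff (toFinsupp3 p) f * ∏ i, r i ^ (toFinsupp3 p i) := by
    intro p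
    rw [Fin.prod_univ_three]
    simp only [toFinsupp3_apply, geomMoment, geomCoeff]
    have := hfact p
    field_simp
    simp
    ring
  simp only [hterm]
  have hinj : Set.InjOn toFinsupp3 S := by
    intro p _ q _ h
    have h0 := congrArg (fun d => (d : Fin 3 →₀ ℕ) 0) h
    have h1 := congrArg (fun d => (d : Fin 3 →₀ ℕ) 1) h
    have h2 := congrArg (fun d => (d : Fin 3 →₀ ℕ) 2) h
    simp only [toFinsupp3_apply] at h0 h1 h2
    simp [Matrix.cons_val_zero, Matrix.cons_val_one] at h0 h1 h2
    exact Prod.ext h0 (Prod.ext h1 h2)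
  have himg : (∑ p ∈ S, MvPolynomial.coeff (toFinsupp3 p) f * ∏ i, r i ^ (toFinsupp3 p) i)
      = ∑ d ∈ S.image toFinsupp3, MvPolynomial.coeff d f * ∏ i, r i ^ d i :=
    (Finset.sum_image (f := fun d => MvPolynomial.coeff d f * ∏ i, r i ^ d i)
      (fun p hp q hq h => hinj hp hq h)).symm
  rw [himg]
  have hsub : f.support ⊆ S.image toFinsupp3 := by
    intro d hd
    refine Finset.mem_image.mpr ⟨(d 0, d 1, d 2), ?_, ?_⟩
    · rw [hS]
      have hsum : d.sum (fun _ e => e) ≤ L := le_trans (MvPolynomial.le_totalDegree hd) hf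
      have : d.sum (fun _ e => e) = d 0 + d 1 + d 2 := by
        rw [Finsupp.sum_fintype _ _ (fun _ => rfl), Fin.sum_univ_three]
      simpa [this] using hsum
    · ext i
      fin_cases i <;> simp [toFinsupp3_apply]
  rw [MvPolynomial.eval_eq']
  apply Finset.sum_subset hsub
  intro d _ hd
  rw [MvPolynomial.notMem_support_iff.mp hd, zero_mul]

/-- The free mesh transform reproduces polynomials of total degree ≤ L exactly
at every point: if `Λ = Q·R` with `QᵀQ = I` and `R` invertible, where
`Λ_{i,(lmn)} = Λ_{lmn}(x_i)` over all multi-indices of total degree ≤ L,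
then for every trivariate polynomial `f` of total degree ≤ L, with sampled
values `f_p` and coefficients `F = R⁻¹·Qᵀ·f_p`, one has
`f(r) = ∑_{(l,m,n)} Λ_{lmn}(r) · F_{lmn}` for every `r ∈ ℝ³`. -/
theorem free_mesh_transform_reproduces_polynomials
    (L N : ℕ) (x : Fin N → (Fin 3 → ℝ))
    (S : Finset (ℕ × ℕ × ℕ))
    (hS : ∀ p : ℕ × ℕ × ℕ, p ∈ S ↔ p.1 + p.2.1 + p.2.2 ≤ L)
    (Λ Q : Matrix (Fin N) S ℝ) (R : Matrix S S ℝ)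
    (hΛ : ∀ (i : Fin N) (p : S), Λ i p = geomMoment (p : ℕ × ℕ × ℕ) (x i))
    (hQR : Λ = Q * R) (hQ : Qᵀ * Q = 1) (hR : IsUnit R.det)
    (f : MvPolynomial (Fin 3) ℝ) (hf : f.totalDegree ≤ L)
    (fp : Fin N → ℝ) (hfp : ∀ i : Fin N, fp i = MvPolynomial.eval (x i) f)
    (F : S → ℝ) (hF : F = (R⁻¹ * Qᵀ).mulVec fp) :
    ∀ r : Fin 3 → ℝ,
      MvPolynomial.eval r f = ∑ p : S, geomMoment (p : ℕ × ℕ × ℕ) r * F p := by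
  intro r
  set c : S → ℝ := fun p => geomCoeff f (p : ℕ × ℕ × ℕ) with hc
  have hfpΛ : fp = Λ.mulVec c := by
    funext i
    rw [hfp i, eval_eq_sum_geom L S hS f hf (x i)]
    rw [Matrix.mulVec]
    simp only [dotProduct, hΛ]
    rw [← Finset.sum_coe_sort S (fun p => geomMoment p (x i) * geomCoeff f p)]
  have hFc : F = c := by
    rw [hF, hfpΛ, Matrix.mulVec_mulVec, hQR, ← Matrix.mul_assoc, Matrix.mul_assoc R⁻¹ Qᵀ Q,
      hQ, Matrix.mul_one, Matrix.nonsing_inv_mul R hR, Matrix.one_mulVec]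
  rw [hFc, eval_eq_sum_geom L S hS f hf r,
    ← Finset.sum_coe_sort S (fun p => geomMoment p r * geomCoeff f p)]
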